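/- Let A be an abelian category and M an object admitting a filtration 0 = M₀ ⊂ M₁ ⊂ ⋯ ⊂ M_t = M with each subquotient M_i/M_{i−1} isomorphic to one of fixed objects X₁,…,X_r, where Ext¹(X_j, X_i) = 0 for all j ≥ i. Let a_j be the number of indices i with M_i/M_{i−1} ≅ X_j. Then M admits a filtration 0 = N_r ⊆ N_{r−1} ⊆ ⋯ ⊆ N₀ = M with N_{j−1}/N_j ≅ X_j^{a_j} for each 1 ≤ j ≤ r. -/

import Mathlib

open Submodule LinearMap Function

section Helpers

variable {R : Type} [Ring R] {M : Type} [AddCommGroup M] [Module R M]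

/-- Subquotient `B / A` as a type. -/
abbrev SQ (B A : Submodule R M) : Type := ↥B ⧸ Submodule.comap B.subtype A

/-- Workhorse: present `SQ B A` via a surjection. -/
noncomputable def sqEquiv {B A : Submodule R M} {V : Type} [AddCommGroup V] [Module R V]
    (g : ↥B →ₗ[R] V) (hsurj : Surjective g) (hker : ker g = comap B.subtype A) :
    SQ B A ≃ₗ[R] V :=
  (Submodule.quotEquivOfEq _ _ hker.symm).trans (g.quotKerEquivOfSurjective hsurj)

/-- Subquotients computed inside a submodule `W` agree with those computed in `M`. -/
noncomputable def sqComapEquiv {W A B : Submodule R M} (hB : B ≤ W) (_hA : A ≤ B) :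
    SQ (comap W.subtype B) (comap W.subtype A) ≃ₗ[R] SQ B A := by
  refine sqEquiv ((comap B.subtype A).mkQ ∘ₗ (comapSubtypeEquivOfLe hB).toLinearMap)
    (fun y => by
      obtain ⟨x, rfl⟩ := Submodule.mkQ_surjective _ y
      refine ⟨(comapSubtypeEquivOfLe hB).symm x, ?_⟩
      rw [LinearMap.comp_apply, LinearEquiv.coe_coe, LinearEquiv.apply_symm_apply]) ?_
  ext x
  simp [LinearMap.mem_ker, Submodule.Quotient.mk_eq_zero, Submodule.mem_comap]

/-- `SQ ⊤ A` is the plain quotient. -/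
noncomputable def sqTopEquiv (A : Submodule R M) : SQ (⊤ : Submodule R M) A ≃ₗ[R] M ⧸ A := by
  refine sqEquiv (A.mkQ ∘ₗ (⊤ : Submodule R M).subtype)
    (fun y => by
      obtain ⟨x, rfl⟩ := Submodule.mkQ_surjective _ y
      exact ⟨⟨x, trivial⟩, rfl⟩) ?_
  ext x
  simp [LinearMap.mem_ker, Submodule.Quotient.mk_eq_zero]

/-- Splitting property: every extension of `Z` by `Y` splits. -/
def SplitsOver (R : Type) [Ring R] (Z Y : Type) [AddCommGroup Z] [Module R Z]
    [AddCommGroup Y] [Module R Y] : Prop :=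
  ∀ (E : Type) [AddCommGroup E] [Module R E] (f : Y →ₗ[R] E) (g : E →ₗ[R] Z),
    Injective f → Surjective g → range f = ker g →
    ∃ h : Z →ₗ[R] E, g ∘ₗ h = LinearMap.id

section Splits

variable {Z Y Y' Y₁ Y₂ : Type} [AddCommGroup Z] [Module R Z] [AddCommGroup Y] [Module R Y]
  [AddCommGroup Y'] [Module R Y'] [AddCommGroup Y₁] [Module R Y₁] [AddCommGroup Y₂] [Module R Y₂]

theorem SplitsOver.congr (h : SplitsOver R Z Y) (e : Y ≃ₗ[R] Y') : SplitsOver R Z Y' := by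
  intro E _ _ f g hf hg hr
  refine h E (f ∘ₗ e.toLinearMap) g (hf.comp e.injective) hg ?_
  rw [← hr, LinearMap.range_comp, LinearEquiv.range, Submodule.map_top]

theorem splitsOver_of_subsingleton [Subsingleton Y] : SplitsOver R Z Y := by
  intro E _ _ f g hf hg hr
  have hker : ker g = ⊥ := by
    rw [← hr, eq_bot_iff]
    rintro x ⟨y, rfl⟩
    simp [Subsingleton.elim y 0]
  have hbij : Bijective g := ⟨ker_eq_bot.mp hker, hg⟩
  refine ⟨(LinearEquiv.ofBijective g hbij).symm.toLinearMap, ?_⟩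
  ext z
  exact (LinearEquiv.ofBijective g hbij).apply_symm_apply z

theorem splitsOver_extension (u : Y₁ →ₗ[R] Y) (v : Y →ₗ[R] Y₂)
    (hu : Injective u) (hv : Surjective v) (huv : range u = ker v)
    (h1 : SplitsOver R Z Y₁) (h2 : SplitsOver R Z Y₂) : SplitsOver R Z Y := by
  intro E _ _ f g hf hg hr
  set P : Submodule R E := range (f ∘ₗ u) with hP
  -- the induced extension of Z by Y₂ on E/P
  have hPker : P ≤ ker g := by
    rintro x ⟨y, rfl⟩
    have : f (u y) ∈ ker g := hr ▸ ⟨u y, rfl⟩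
    simpa using this
  set g' : E ⧸ P →ₗ[R] Z := P.liftQ g hPker with hg'
  have hkv : ker v ≤ ker (P.mkQ ∘ₗ f) := by
    intro y hy
    rw [← huv] at hy
    obtain ⟨y₁, rfl⟩ := hy
    simp [LinearMap.mem_ker, Submodule.Quotient.mk_eq_zero, hP]
  set f₂ : Y₂ →ₗ[R] E ⧸ P :=
    ((ker v).liftQ (P.mkQ ∘ₗ f) hkv) ∘ₗ (v.quotKerEquivOfSurjective hv).symm.toLinearMap with hf₂
  have hf₂v : ∀ y : Y, f₂ (v y) = P.mkQ (f y) := by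
    intro y
    have h1 : (v.quotKerEquivOfSurjective hv).symm (v y) = Submodule.Quotient.mk y := by
      apply (v.quotKerEquivOfSurjective hv).injective
      rw [LinearEquiv.apply_symm_apply]
      rfl
    simp [hf₂, h1]
  have hf₂inj : Injective f₂ := by
    intro a b hab
    obtain ⟨ya, rfl⟩ := hv a
    obtain ⟨yb, rfl⟩ := hv b
    rw [hf₂v, hf₂v] at hab
    rw [Submodule.mkQ_apply, Submodule.mkQ_apply, Submodule.Quotient.eq] at hab
    obtain ⟨y₁, hy₁⟩ := hab
    have huy : u y₁ = ya - yb := hf (by simpa using hy₁)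
    have hker : ya - yb ∈ ker v := huv ▸ ⟨y₁, huy⟩
    rw [LinearMap.mem_ker, map_sub, sub_eq_zero] at hker
    exact hker
  have hg'surj : Surjective g' := by
    intro z
    obtain ⟨x, rfl⟩ := hg z
    exact ⟨P.mkQ x, rfl⟩
  have hrange₂ : range f₂ = ker g' := by
    apply le_antisymm
    · rintro _ ⟨y₂, rfl⟩
      obtain ⟨y, rfl⟩ := hv y₂
      rw [hf₂v]
      have : f y ∈ ker g := hr ▸ ⟨y, rfl⟩
      simpa [LinearMap.mem_ker, hg'] using this
    · rintro x hx
      obtain ⟨e, rfl⟩ := P.mkQ_surjective x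
      have hge : g e = 0 := hx
      obtain ⟨y, rfl⟩ := (hr ▸ hge : e ∈ range f)
      exact ⟨v y, (hf₂v y).symm ▸ rfl⟩
  obtain ⟨h₂, hh₂⟩ := h2 (E ⧸ P) f₂ g' hf₂inj hg'surj hrange₂
  -- pull back along the section h₂
  set E₀ : Submodule R E := comap P.mkQ (range h₂) with hE₀
  have hfE₀ : ∀ y₁ : Y₁, f (u y₁) ∈ E₀ := by
    intro y₁
    have : P.mkQ (f (u y₁)) = 0 := by
      rw [Submodule.mkQ_apply, Submodule.Quotient.mk_eq_zero]
      exact ⟨y₁, rfl⟩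
    rw [hE₀, Submodule.mem_comap, this]
    exact ⟨0, map_zero _⟩
  set f₀ : Y₁ →ₗ[R] ↥E₀ := (f ∘ₗ u).codRestrict E₀ hfE₀ with hf₀
  set g₀ : ↥E₀ →ₗ[R] Z := g ∘ₗ E₀.subtype with hg₀
  have hg₀surj : Surjective g₀ := by
    intro z
    obtain ⟨e, he⟩ := P.mkQ_surjective (h₂ z)
    refine ⟨⟨e, by rw [hE₀, Submodule.mem_comap, he]; exact ⟨z, rfl⟩⟩, ?_⟩
    have h2 : g' (h₂ z) = z := DFunLike.congr_fun hh₂ z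
    show g e = z
    rw [← he] at h2
    exact h2
  have hf₀inj : Injective f₀ := by
    intro a b hab
    apply hu
    apply hf
    exact congrArg Subtype.val hab
  have hr₀ : range f₀ = ker g₀ := by
    apply le_antisymm
    · rintro _ ⟨y₁, rfl⟩
      have : g (f (u y₁)) = 0 := by
        have : f (u y₁) ∈ ker g := hr ▸ ⟨u y₁, rfl⟩
        simpa using this
      simpa [hg₀, hf₀, LinearMap.mem_ker] using this
    · rintro ⟨e, he⟩ hx
      have hge : g e = 0 := hx
      obtain ⟨z, hz⟩ := (by rwa [hE₀, Submodule.mem_comap] at he : P.mkQ e ∈ range h₂)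
      have hz0 : z = 0 := by
        have h2 : g' (h₂ z) = z := DFunLike.congr_fun hh₂ z
        rw [hz] at h2
        have : g' (P.mkQ e) = g e := rfl
        rw [this, hge] at h2
        exact h2.symm
      rw [hz0, map_zero] at hz
      have : e ∈ P := by
        rw [← Submodule.Quotient.mk_eq_zero, ← Submodule.mkQ_apply]
        exact hz.symm
      obtain ⟨y₁, hy₁⟩ := this
      exact ⟨y₁, Subtype.ext hy₁⟩
  obtain ⟨h₁, hh₁⟩ := h1 ↥E₀ f₀ g₀ hf₀inj hg₀surj hr₀
  refine ⟨E₀.subtype ∘ₗ h₁, ?_⟩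
  ext z
  have h1z : g₀ (h₁ z) = z := DFunLike.congr_fun hh₁ z
  exact h1z

theorem splitsOver_pi (h : SplitsOver R Z Y) : ∀ a : ℕ, SplitsOver R Z (Fin a → Y)
  | 0 => by
    haveI : Unique (Fin 0 → Y) := Pi.uniqueOfIsEmpty _
    exact splitsOver_of_subsingleton
  | (a + 1) => by
    classical
    refine splitsOver_extension (R := R) (Z := Z)
      (LinearMap.single R (fun _ : Fin (a + 1) => Y) (Fin.last a))
      (LinearMap.funLeft R Y Fin.castSucc) ?_ ?_ ?_ h (splitsOver_pi h a)
    · intro x y hxy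
      have := congrFun hxy (Fin.last a)
      simpa using this
    · intro p
      refine ⟨Fin.snoc p 0, ?_⟩
      ext i
      simp [LinearMap.funLeft]
    · apply le_antisymm
      · rintro _ ⟨y, rfl⟩
        ext i
        simp [LinearMap.funLeft, Pi.single_eq_of_ne (Fin.castSucc_lt_last i).ne]
      · rintro q hq
        have hq' : ∀ i : Fin a, q i.castSucc = 0 := by
          intro i
          exact congrFun (hq : LinearMap.funLeft R Y Fin.castSucc q = 0) i
        refine ⟨q (Fin.last a), ?_⟩
        ext i
        refine Fin.lastCases ?_ ?_ i
        · simp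
        · intro i
          simp [Pi.single_eq_of_ne (Fin.castSucc_lt_last i).ne, hq' i]

end Splits

section Exact

variable {R : Type} [Ring R] {M : Type} [AddCommGroup M] [Module R M]

/-- The canonical exact data `SQ B A → SQ C A → SQ C B` for `A ≤ B ≤ C`. -/
theorem sq_exact {A B C : Submodule R M} (hAB : A ≤ B) (hBC : B ≤ C) :
    ∃ (u : SQ B A →ₗ[R] SQ C A) (v : SQ C A →ₗ[R] SQ C B),
      Injective u ∧ Surjective v ∧ range u = ker v := by
  refine ⟨Submodule.mapQ _ _ (Submodule.inclusion hBC)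
      (fun x hx => by simpa [Submodule.mem_comap] using hx),
    Submodule.mapQ _ _ LinearMap.id
      (fun x hx => by exact hAB hx), ?_, ?_, ?_⟩
  · intro a b hab
    obtain ⟨x, rfl⟩ := Submodule.Quotient.mk_surjective _ a
    obtain ⟨y, rfl⟩ := Submodule.Quotient.mk_surjective _ b
    rw [Submodule.mapQ_apply, Submodule.mapQ_apply, Submodule.Quotient.eq] at hab
    rw [Submodule.Quotient.eq]
    simpa [Submodule.mem_comap] using hab
  · intro q
    obtain ⟨x, rfl⟩ := Submodule.Quotient.mk_surjective _ q
    exact ⟨Submodule.Quotient.mk x, by rw [Submodule.mapQ_apply]; rfl⟩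
  · apply le_antisymm
    · rintro _ ⟨a, rfl⟩
      obtain ⟨x, rfl⟩ := Submodule.Quotient.mk_surjective _ a
      rw [Submodule.mapQ_apply, LinearMap.mem_ker, Submodule.mapQ_apply,
        Submodule.Quotient.mk_eq_zero]
      simpa [Submodule.mem_comap] using x.2
    · rintro q hq
      obtain ⟨x, rfl⟩ := Submodule.Quotient.mk_surjective _ q
      rw [LinearMap.mem_ker, Submodule.mapQ_apply, Submodule.Quotient.mk_eq_zero,
        Submodule.mem_comap] at hq
      refine ⟨Submodule.Quotient.mk ⟨(x : M), hq⟩, ?_⟩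
      rw [Submodule.mapQ_apply]
      rfl

/-- Chain splitting: if all layers of an antitone chain split over `Z`, so does the whole. -/
theorem splitsOver_chain {Z : Type} [AddCommGroup Z] [Module R Z] :
    ∀ (n : ℕ) (Q : Fin (n + 1) → Submodule R M), Antitone Q →
      (∀ i : Fin n, SplitsOver R Z (SQ (Q i.castSucc) (Q i.succ))) →
      SplitsOver R Z (SQ (Q 0) (Q (Fin.last n)))
  | 0, Q, _, _ => by
    haveI : Subsingleton (SQ (Q 0) (Q (Fin.last 0))) := by
      rw [Submodule.Quotient.subsingleton_iff]
      ext x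
      simpa using x.2
    exact splitsOver_of_subsingleton
  | (n + 1), Q, hQ, hlayers => by
    have hmid : SplitsOver R Z (SQ (Q 1) (Q (Fin.last (n + 1)))) := by
      have := splitsOver_chain n (Q ∘ Fin.succ) (fun i j hij => hQ (Fin.succ_le_succ_iff.mpr hij))
        (fun i => by
          have h := hlayers i.succ
          have e1 : (i.succ).castSucc = (i.castSucc).succ := (Fin.succ_castSucc i).symm
          rw [e1] at h
          exact h)
      have e2 : (Fin.last n).succ = Fin.last (n + 1) := Fin.succ_last n
      rw [Function.comp, Function.comp] at this
      rw [e2] at this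
      exact this
    have h0 : SplitsOver R Z (SQ (Q 0) (Q 1)) := hlayers 0
    obtain ⟨u, v, hu, hv, huv⟩ := sq_exact (A := Q (Fin.last (n + 1))) (B := Q 1) (C := Q 0)
      (hQ (by simp [Fin.le_def, Fin.lt_def])) (hQ (by simp [Fin.le_def]))
    exact splitsOver_extension u v hu hv huv hmid h0

/-- A split extension is a direct sum. -/
theorem split_prod_equiv {Y E Z : Type} [AddCommGroup Y] [Module R Y] [AddCommGroup E]
    [Module R E] [AddCommGroup Z] [Module R Z] (f : Y →ₗ[R] E) (g : E →ₗ[R] Z)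
    (hf : Injective f) (hg : Surjective g) (hr : range f = ker g)
    (hs : SplitsOver R Z Y) : Nonempty (E ≃ₗ[R] Y × Z) := by
  obtain ⟨h, hh⟩ := hs E f g hf hg hr
  have hgh : ∀ z, g (h z) = z := fun z => DFunLike.congr_fun hh z
  refine ⟨(LinearEquiv.ofBijective (f.coprod h) ⟨?_, ?_⟩).symm⟩
  · intro p q hpq
    obtain ⟨y1, z1⟩ := p
    obtain ⟨y2, z2⟩ := q
    simp only [LinearMap.coprod_apply] at hpq
    have hz : z1 = z2 := by
      have := congrArg g hpq
      have hy1 : g (f y1) = 0 := by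
        have : f y1 ∈ ker g := hr ▸ ⟨y1, rfl⟩
        simpa using this
      have hy2 : g (f y2) = 0 := by
        have : f y2 ∈ ker g := hr ▸ ⟨y2, rfl⟩
        simpa using this
      simpa [map_add, hy1, hy2, hgh] using this
    subst hz
    have : f y1 = f y2 := by
      have := hpq
      simpa using sub_eq_zero.mp (by rw [← sub_eq_zero] at this; simpa using this)
    exact Prod.ext (hf this) rfl
  · intro x
    have hker : x - h (g x) ∈ ker g := by simp [hgh]
    obtain ⟨y, hy⟩ := (hr ▸ hker : x - h (g x) ∈ range f)
    exact ⟨(y, g x), by simp [hy]⟩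

/-- `SQ C A` decomposes when the top layer splits over the bottom one. -/
theorem sq_split {A B C : Submodule R M} (hAB : A ≤ B) (hBC : B ≤ C)
    {Y Z : Type} [AddCommGroup Y] [Module R Y] [AddCommGroup Z] [Module R Z]
    (e1 : SQ B A ≃ₗ[R] Y) (e2 : SQ C B ≃ₗ[R] Z) (hs : SplitsOver R Z Y) :
    Nonempty (SQ C A ≃ₗ[R] Y × Z) := by
  obtain ⟨u, v, hu, hv, huv⟩ := sq_exact hAB hBC
  refine split_prod_equiv (u ∘ₗ e1.symm.toLinearMap) (e2.toLinearMap ∘ₗ v) ?_ ?_ ?_ hs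
  · exact hu.comp e1.symm.injective
  · exact e2.surjective.comp hv
  · rw [LinearMap.range_comp, LinearEquiv.range, Submodule.map_top, huv]
    rw [LinearMap.ker_comp, LinearEquiv.ker, Submodule.comap_bot]

/-- `(Fin a → X) × X ≃ₗ (Fin (a+1) → X)` by `Fin.snoc`. -/
def snocLinearEquiv (R : Type) [Ring R] {X : Type} [AddCommGroup X] [Module R X] (a : ℕ) :
    ((Fin a → X) × X) ≃ₗ[R] (Fin (a + 1) → X) where
  toFun p := Fin.snoc p.1 p.2
  invFun f := (fun i => f i.castSucc, f (Fin.last a))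
  map_add' p q := by
    ext i
    refine Fin.lastCases ?_ ?_ i <;> simp
  map_smul' r p := by
    ext i
    refine Fin.lastCases ?_ ?_ i <;> simp
  left_inv p := by
    ext i <;> simp
  right_inv f := by
    ext i
    refine Fin.lastCases ?_ ?_ i <;> simp

end Exact

end Helpers

section Main

variable {R : Type} [Ring R] {r : ℕ}

/-- Subsingleton modules are linearly equivalent. -/
noncomputable def subsingletonLEquiv (A B : Type) [AddCommGroup A] [Module R A]
    [AddCommGroup B] [Module R B] [Subsingleton A] [Subsingleton B] : A ≃ₗ[R] B where
  toFun _ := 0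
  invFun _ := 0
  map_add' _ _ := (Subsingleton.elim _ _)
  map_smul' _ _ := (Subsingleton.elim _ _)
  left_inv _ := Subsingleton.elim _ _
  right_inv _ := Subsingleton.elim _ _

theorem stmt6_aux (X : Fin r → Type) [∀ j, AddCommGroup (X j)] [∀ j, Module R (X j)]
    (hs : ∀ i j : Fin r, i ≤ j → SplitsOver R (X j) (X i)) :
    ∀ (t : ℕ) (M : Type) [AddCommGroup M] [Module R M]
      (Mf : Fin (t + 1) → Submodule R M), Monotone Mf → Mf 0 = ⊥ → Mf (Fin.last t) = ⊤ →
      ∀ (c : Fin t → Fin r),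
      (∀ i : Fin t, Nonempty (SQ (Mf i.succ) (Mf i.castSucc) ≃ₗ[R] X (c i))) →
      ∃ N : Fin (r + 1) → Submodule R M, Antitone N ∧ N 0 = ⊤ ∧ N (Fin.last r) = ⊥ ∧
        ∀ j : Fin r, Nonempty (SQ (N j.castSucc) (N j.succ) ≃ₗ[R]
          (Fin ((Finset.univ.filter fun i => c i = j).card) → X j)) := by
  intro t
  induction t with
  | zero =>
    intro M _ _ Mf hmono hbot htop c hquot
    refine ⟨fun _ => ⊥, fun _ _ _ => le_refl _, ?_, rfl, ?_⟩
    · rw [← hbot]; exact htop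
    · intro j
      have hcard : (Finset.univ.filter fun i : Fin 0 => c i = j).card = 0 := by simp
      rw [hcard]
      haveI : Unique (Fin 0 → X j) := Pi.uniqueOfIsEmpty _
      haveI : Subsingleton (SQ (⊥ : Submodule R M) (⊥ : Submodule R M)) :=
        ⟨fun a b => by
          obtain ⟨x, rfl⟩ := Submodule.Quotient.mk_surjective _ a
          obtain ⟨y, rfl⟩ := Submodule.Quotient.mk_surjective _ b
          exact congrArg _ (Subsingleton.elim x y)⟩
      exact ⟨subsingletonLEquiv _ _⟩
  | succ t IH =>
    intro M _ _ Mf hmono hbot htop c hquot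
    classical
    set M'' : Submodule R M := Mf (Fin.castSucc (Fin.last t)) with hM''
    set k : Fin r := c (Fin.last t) with hk
    have hMle : ∀ i : Fin (t + 1), Mf (Fin.castSucc i) ≤ M'' :=
      fun i => hmono (Fin.castSucc_le_castSucc_iff.mpr (Fin.le_last i))
    -- the induced filtration on M''
    have hbot' : comap M''.subtype (Mf (Fin.castSucc 0)) = ⊥ := by
      have h0 : Fin.castSucc (0 : Fin (t + 1)) = 0 := rfl
      rw [h0, hbot, Submodule.comap_bot, Submodule.ker_subtype]
    have htop' : comap M''.subtype (Mf (Fin.castSucc (Fin.last t))) = ⊤ :=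
      Submodule.comap_subtype_self _
    have hquot' : ∀ i : Fin t,
        Nonempty (SQ (comap M''.subtype (Mf (Fin.castSucc i.succ)))
          (comap M''.subtype (Mf (Fin.castSucc i.castSucc))) ≃ₗ[R] X (c (Fin.castSucc i))) := by
      intro i
      obtain ⟨e⟩ := hquot (Fin.castSucc i)
      have hcs : Fin.castSucc i.succ = (Fin.castSucc i).succ := Fin.succ_castSucc i
      have hcc : Fin.castSucc i.castSucc = (Fin.castSucc i).castSucc := rfl
      rw [hcs, hcc]
      exact ⟨(sqComapEquiv (hMle i.succ)
        (hmono (by simp [Fin.le_def]))).trans e⟩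
    obtain ⟨N'', hN''anti, hN''top, hN''bot, hN''quot⟩ :=
      IH ↥M'' (fun i => comap M''.subtype (Mf (Fin.castSucc i)))
        (fun i j hij => Submodule.comap_mono (hmono (Fin.castSucc_le_castSucc_iff.mpr hij)))
        hbot' htop' (fun i => c (Fin.castSucc i)) hquot'
    set N' : Fin (r + 1) → Submodule R M := fun j => Submodule.map M''.subtype (N'' j) with hN'
    have hN'anti : Antitone N' := fun i j hij => Submodule.map_mono (hN''anti hij)
    have hN'0 : N' 0 = M'' := by
      rw [hN']
      simp only [hN''top, Submodule.map_top, Submodule.range_subtype]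
    have hN'last : N' (Fin.last r) = ⊥ := by
      rw [hN']
      simp only [hN''bot, Submodule.map_bot]
    have hN'le : ∀ j, N' j ≤ M'' := fun j => Submodule.map_subtype_le _ _
    have hN'comap : ∀ j, comap M''.subtype (N' j) = N'' j := by
      intro j
      rw [hN', Submodule.comap_map_eq, Submodule.ker_subtype, sup_bot_eq]
    have hN'quot : ∀ j : Fin r, Nonempty (SQ (N' j.castSucc) (N' j.succ) ≃ₗ[R]
        (Fin ((Finset.univ.filter fun i : Fin t => c (Fin.castSucc i) = j).card) → X j)) := by
      intro j
      obtain ⟨e⟩ := hN''quot j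
      have equiv := sqComapEquiv (R := R) (W := M'') (A := N' j.succ) (B := N' j.castSucc)
        (hN'le _) (hN'anti (by simp [Fin.le_def]))
      rw [hN'comap, hN'comap] at equiv
      exact ⟨equiv.symm.trans e⟩
    -- the top quotient M / M'' is X k
    obtain ⟨etop⟩ := hquot (Fin.last t)
    rw [show (Fin.last t).succ = Fin.last (t + 1) from Fin.succ_last t, htop] at etop
    have e_k : (M ⧸ M'') ≃ₗ[R] X k := (sqTopEquiv M'').symm.trans etop
    set base : Submodule R M := N' k.succ with hbase
    have hbaseM : base ≤ M'' := hN'le _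
    -- split the extension `0 → M''/base → M/base → X k → 0`
    have hsplitMid : SplitsOver R (X k) (SQ M'' base) := by
      have hkr : (k : ℕ) + 1 + 1 ≤ r + 1 := by omega
      have hch := splitsOver_chain ((k : ℕ) + 1) (fun i => N' (Fin.castLE hkr i))
        (fun i j hij => hN'anti hij)
        (fun i => by
          have hjr : (i : ℕ) < r := by omega
          have hjk : (⟨(i : ℕ), hjr⟩ : Fin r) ≤ k := by
            rw [Fin.le_def]
            exact Nat.lt_succ_iff.mp i.isLt
          obtain ⟨e⟩ := hN'quot ⟨(i : ℕ), hjr⟩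
          exact (splitsOver_pi (hs _ k hjk) _).congr e.symm)
      have hch' : SplitsOver R (X k) (SQ (N' 0) (N' k.succ)) := hch
      rw [hN'0] at hch'
      exact hch'
    -- quotient map to X k with kernel M''/base
    have hbc : base ≤ Submodule.comap (LinearMap.id : M →ₗ[R] M) M'' := hbaseM
    set g0 : (M ⧸ base) →ₗ[R] X k := e_k.toLinearMap ∘ₗ Submodule.mapQ base M'' LinearMap.id hbc
      with hg0
    set fM : SQ M'' base →ₗ[R] (M ⧸ base) :=
      Submodule.mapQ (comap M''.subtype base) base M''.subtype (fun x hx => hx) with hfM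
    have hfM_mk : ∀ x : ↥M'', fM (Submodule.Quotient.mk x) = Submodule.Quotient.mk (x : M) :=
      fun x => rfl
    have hg0_mk : ∀ m : M, g0 (Submodule.Quotient.mk m) = e_k (Submodule.Quotient.mk m) := by
      intro m; rfl
    have hfM_inj : Injective fM := by
      intro a b hab
      obtain ⟨x, rfl⟩ := Submodule.Quotient.mk_surjective _ a
      obtain ⟨y, rfl⟩ := Submodule.Quotient.mk_surjective _ b
      rw [hfM_mk, hfM_mk, Submodule.Quotient.eq] at hab
      rw [Submodule.Quotient.eq]
      exact hab
    have hg0_surj : Surjective g0 := by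
      intro z
      obtain ⟨q, hq⟩ := e_k.surjective z
      obtain ⟨m, rfl⟩ := Submodule.Quotient.mk_surjective _ q
      exact ⟨Submodule.Quotient.mk m, by rw [hg0_mk]; exact hq⟩
    have hrangefM : range fM = ker g0 := by
      apply le_antisymm
      · rintro _ ⟨a, rfl⟩
        obtain ⟨x, rfl⟩ := Submodule.Quotient.mk_surjective _ a
        rw [LinearMap.mem_ker, hfM_mk, hg0_mk]
        have h0 : (Submodule.Quotient.mk (x : M) : M ⧸ M'') = 0 :=
          (Submodule.Quotient.mk_eq_zero _).mpr x.2
        rw [h0, map_zero]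
      · rintro q hq
        obtain ⟨m, rfl⟩ := Submodule.Quotient.mk_surjective _ q
        rw [LinearMap.mem_ker, hg0_mk] at hq
        have hm : m ∈ M'' := by
          rw [← Submodule.Quotient.mk_eq_zero M'']
          apply e_k.injective
          rw [hq, map_zero]
        exact ⟨Submodule.Quotient.mk ⟨m, hm⟩, rfl⟩
    -- the section and the complementary submodule T
    obtain ⟨hsec, hsec_eq⟩ := hsplitMid (M ⧸ base) fM g0 hfM_inj hg0_surj hrangefM
    have hsec_id : ∀ z, g0 (hsec z) = z := fun z => DFunLike.congr_fun hsec_eq z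
    set T : Submodule R M := comap base.mkQ (range hsec) with hT
    have hbaseT : base ≤ T := by
      intro x hx
      show base.mkQ x ∈ range hsec
      rw [Submodule.mkQ_apply, (Submodule.Quotient.mk_eq_zero _).mpr hx]
      exact ⟨0, map_zero _⟩
    have hTM : T ⊓ M'' ≤ base := by
      intro x hx
      rw [Submodule.mem_inf] at hx
      obtain ⟨hxT, hxM⟩ := hx
      obtain ⟨z, hz⟩ := hxT
      have h1 : g0 (base.mkQ x) = 0 := by
        rw [Submodule.mkQ_apply, hg0_mk, (Submodule.Quotient.mk_eq_zero _).mpr hxM, map_zero]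
      rw [← hz, hsec_id] at h1
      rw [h1, map_zero] at hz
      rw [Submodule.mkQ_apply, eq_comm, Submodule.Quotient.mk_eq_zero] at hz
      exact hz
    have hsup : M'' ⊔ T = ⊤ := by
      rw [eq_top_iff]
      intro x _
      have hker : base.mkQ x - hsec (g0 (base.mkQ x)) ∈ ker g0 := by
        rw [LinearMap.mem_ker, map_sub, hsec_id, sub_self]
      rw [← hrangefM] at hker
      obtain ⟨a, ha⟩ := hker
      obtain ⟨m, rfl⟩ := Submodule.Quotient.mk_surjective _ a
      rw [hfM_mk] at ha
      have hxm : x - (m : M) ∈ T := by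
        show base.mkQ (x - (m : M)) ∈ range hsec
        rw [map_sub, show base.mkQ (m : M) = Submodule.Quotient.mk (m : M) from rfl, ha]
        exact ⟨g0 (base.mkQ x), by rw [sub_sub_cancel]⟩
      have := Submodule.add_mem_sup m.2 hxm
      simpa using this
    have eT : Nonempty (SQ T base ≃ₗ[R] X k) := by
      refine ⟨sqEquiv (g0 ∘ₗ base.mkQ ∘ₗ T.subtype) ?_ ?_⟩
      · intro z
        obtain ⟨q, hq⟩ := Submodule.Quotient.mk_surjective base (hsec z)
        have hqT : q ∈ T := by
          show base.mkQ q ∈ range hsec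
          rw [Submodule.mkQ_apply, hq]
          exact ⟨z, rfl⟩
        refine ⟨⟨q, hqT⟩, ?_⟩
        show g0 (base.mkQ q) = z
        rw [Submodule.mkQ_apply, hq, hsec_id]
      · ext x
        simp only [LinearMap.mem_ker, LinearMap.comp_apply, Submodule.coe_subtype,
          Submodule.mem_comap]
        constructor
        · intro h0
          obtain ⟨z, hz⟩ := x.2
          rw [Submodule.mkQ_apply] at h0 hz
          rw [← hz, hsec_id] at h0
          rw [h0, map_zero] at hz
          rw [eq_comm, Submodule.Quotient.mk_eq_zero] at hz
          exact hz
        · intro hb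
          rw [Submodule.mkQ_apply, (Submodule.Quotient.mk_eq_zero _).mpr hb, map_zero]
    -- the new filtration
    set N : Fin (r + 1) → Submodule R M :=
      fun j => if (j : ℕ) ≤ (k : ℕ) then N' j ⊔ T else N' j with hNdef
    have hNpos : ∀ jj : Fin (r + 1), (jj : ℕ) ≤ (k : ℕ) → N jj = N' jj ⊔ T := by
      intro jj h
      simp only [hNdef]
      rw [if_pos h]
    have hNneg : ∀ jj : Fin (r + 1), ¬ ((jj : ℕ) ≤ (k : ℕ)) → N jj = N' jj := by
      intro jj h
      simp only [hNdef]
      rw [if_neg h]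
    have hcard : ∀ j : Fin r, ((Finset.univ.filter fun i : Fin (t + 1) => c i = j).card
        = (Finset.univ.filter fun i : Fin t => c (Fin.castSucc i) = j).card
          + if c (Fin.last t) = j then 1 else 0) := by
      intro j
      rw [Finset.card_filter, Finset.card_filter, Fin.sum_univ_castSucc]
    refine ⟨N, ?_, ?_, ?_, ?_⟩
    · intro j1 j2 h12
      by_cases h2 : (j2 : ℕ) ≤ (k : ℕ)
      · have h1 : (j1 : ℕ) ≤ (k : ℕ) := le_trans h12 h2
        rw [hNpos _ h1, hNpos _ h2]
        exact sup_le_sup_right (hN'anti h12) T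
      · by_cases h1 : (j1 : ℕ) ≤ (k : ℕ)
        · rw [hNpos _ h1, hNneg _ h2]
          exact le_trans (hN'anti h12) le_sup_left
        · rw [hNneg _ h1, hNneg _ h2]
          exact hN'anti h12
    · rw [hNpos 0 (Nat.zero_le _), hN'0, hsup]
    · rw [hNneg (Fin.last r) (by rw [Fin.val_last]; omega), hN'last]
    · intro j
      rcases Nat.lt_trichotomy (j : ℕ) (k : ℕ) with hlt | heq | hgt
      · -- strictly above the new layer: add T on both sides
        have hcs : N j.castSucc = N' j.castSucc ⊔ T :=
          hNpos _ (by rw [Fin.coe_castSucc]; omega)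
        have hsc : N j.succ = N' j.succ ⊔ T :=
          hNpos _ (by rw [Fin.val_succ]; omega)
        rw [hcs, hsc]
        have hinf : N' j.castSucc ⊓ (N' j.succ ⊔ T) = N' j.succ := by
          apply le_antisymm
          · intro x hx
            rw [Submodule.mem_inf] at hx
            obtain ⟨hxc, hxs⟩ := hx
            obtain ⟨n, hn, u, hu, rfl⟩ := Submodule.mem_sup.mp hxs
            have hnM : n ∈ M'' := hN'le _ hn
            have huM : u ∈ M'' := by
              have hx : n + u ∈ M'' := hN'le _ hxc
              simpa using sub_mem hx hnM
            have huB : u ∈ base := hTM (Submodule.mem_inf.mpr ⟨hu, huM⟩)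
            refine add_mem hn (hN'anti ?_ huB)
            rw [Fin.le_def, Fin.val_succ, Fin.val_succ]
            omega
          · exact le_inf (hN'anti (by simp [Fin.le_def])) le_sup_left
        have hsup2 : N' j.castSucc ⊔ (N' j.succ ⊔ T) = N' j.castSucc ⊔ T := by
          rw [← sup_assoc, sup_eq_left.mpr (hN'anti (by simp [Fin.le_def]))]
        have e2 := LinearMap.quotientInfEquivSupQuotient (N' j.castSucc) (N' j.succ ⊔ T)
        rw [← Submodule.comap_inf, hinf, hsup2] at e2
        obtain ⟨e⟩ := hN'quot j
        have hcount : (Finset.univ.filter fun i : Fin (t + 1) => c i = j).card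
            = (Finset.univ.filter fun i : Fin t => c (Fin.castSucc i) = j).card := by
          rw [hcard j, if_neg (fun h => by rw [← hk] at h; exact absurd (Fin.val_eq_of_eq h) (by omega)), add_zero]
        rw [hcount]
        exact ⟨e2.symm.trans e⟩
      · -- the layer of the new copy of `X k`
        have hjk : j = k := Fin.ext heq
        rw [hjk]
        have hcs : N k.castSucc = N' k.castSucc ⊔ T :=
          hNpos _ (by rw [Fin.coe_castSucc])
        have hsc : N k.succ = N' k.succ := hNneg _ (by rw [Fin.val_succ]; omega)
        rw [hcs, hsc]
        have hAB : N' k.succ ≤ N' k.castSucc := hN'anti (by simp [Fin.le_def])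
        have hBC : N' k.castSucc ≤ N' k.castSucc ⊔ T := le_sup_left
        obtain ⟨e1⟩ := hN'quot k
        have hinf2 : T ⊓ N' k.castSucc = base := by
          apply le_antisymm
          · intro x hx
            rw [Submodule.mem_inf] at hx
            exact hTM (Submodule.mem_inf.mpr ⟨hx.1, hN'le _ hx.2⟩)
          · exact le_inf hbaseT hAB
        have e2 := LinearMap.quotientInfEquivSupQuotient T (N' k.castSucc)
        rw [← Submodule.comap_inf, hinf2, sup_comm T (N' k.castSucc)] at e2
        obtain ⟨eTT⟩ := eT
        have hsY : SplitsOver R (X k) (Fin ((Finset.univ.filter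
            fun i : Fin t => c (Fin.castSucc i) = k).card) → X k) :=
          splitsOver_pi (hs k k le_rfl) _
        obtain ⟨esplit⟩ := sq_split hAB hBC e1 (e2.symm.trans eTT) hsY
        have hcount : (Finset.univ.filter fun i : Fin (t + 1) => c i = k).card
            = (Finset.univ.filter fun i : Fin t => c (Fin.castSucc i) = k).card + 1 := by
          rw [hcard k, if_pos hk.symm]
        rw [hcount]
        exact ⟨esplit.trans (snocLinearEquiv R _)⟩
      · -- strictly below the new layer: untouched
        have hcs : N j.castSucc = N' j.castSucc :=
          hNneg _ (by rw [Fin.coe_castSucc]; omega)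
        have hsc : N j.succ = N' j.succ := hNneg _ (by rw [Fin.val_succ]; omega)
        rw [hcs, hsc]
        have hcount : (Finset.univ.filter fun i : Fin (t + 1) => c i = j).card
            = (Finset.univ.filter fun i : Fin t => c (Fin.castSucc i) = j).card := by
          rw [hcard j, if_neg (fun h => by rw [← hk] at h; exact absurd (Fin.val_eq_of_eq h) (by omega)), add_zero]
        rw [hcount]
        exact hN'quot j

end Main

/-- In an abelian category (here: modules over a ring `R`), suppose `M` has
a filtration `0 = M₀ ⊂ M₁ ⊂ ⋯ ⊂ M_t = M` whose subquotients are among fixed objects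
`X₁, …, X_r` with `Ext¹(X j, X i) = 0` for `j ≥ i` (encoded: every short exact sequence
`0 → X i → E → X j → 0` with `i ≤ j` splits).  Let `a j` be the number of indices with
subquotient `X j`.  Then `M` has a filtration `0 = N_r ⊆ ⋯ ⊆ N₁ ⊆ N₀ = M` with
`N_{j−1}/N_j ≅ X_j^{a_j}` for each `j`. -/
theorem stmt_6 {R : Type} [Ring R] {M : Type} [AddCommGroup M] [Module R M]
    {r t : ℕ} (X : Fin r → Type) [∀ j, AddCommGroup (X j)] [∀ j, Module R (X j)]
    -- `Ext¹(X j, X i) = 0` for all `j ≥ i`: short exact sequences `0 → Xᵢ → E → Xⱼ → 0` split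
    (hext : ∀ i j : Fin r, i ≤ j →
      ∀ (E : Type) (_ : AddCommGroup E) (_ : Module R E)
        (f : X i →ₗ[R] E) (g : E →ₗ[R] X j),
        Function.Injective f → Function.Surjective g →
        LinearMap.range f = LinearMap.ker g →
        ∃ h : X j →ₗ[R] E, g ∘ₗ h = LinearMap.id)
    -- the given filtration with subquotients `X (c i)`
    (Mf : Fin (t + 1) → Submodule R M) (hmono : Monotone Mf)
    (hbot : Mf 0 = ⊥) (htop : Mf (Fin.last t) = ⊤)
    (c : Fin t → Fin r)
    (hquot : ∀ i : Fin t, Nonempty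
      ((↥(Mf i.succ) ⧸ (Submodule.comap (Mf i.succ).subtype (Mf i.castSucc)))
        ≃ₗ[R] X (c i))) :
    ∃ N : Fin (r + 1) → Submodule R M, Antitone N ∧ N 0 = ⊤ ∧ N (Fin.last r) = ⊥ ∧
      ∀ j : Fin r, Nonempty
        ((↥(N j.castSucc) ⧸ (Submodule.comap (N j.castSucc).subtype (N j.succ)))
          ≃ₗ[R] (Fin ((Finset.univ.filter fun i => c i = j).card) → X j)) := by
  have hs : ∀ i j : Fin r, i ≤ j → SplitsOver R (X j) (X i) := by
    intro i j hij E _ _ f g hf hg hr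
    exact hext i j hij E _ _ f g hf hg hr
  exact stmt6_aux X hs t M Mf hmono hbot htop c hquot
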